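/- arXiv:2601.00032 — 5 statements merged into one kernel-verified Lean document; each statement's English description precedes it below -/
import Mathlib

section
/- If the commutation relations δq̇ᵢ = d/dt(δqᵢ) hold for all i and the Četaev condition δ⁽ᶜ⁾g = 0 holds identically in t, then δ⁽ᵛ⁾g = −Σᵢ 𝒟ᵢg · δqᵢ. -/
open Function

/-- Partial derivative of `F(q, q̇, t)` with respect to the position coordinate `qᵢ`. -/
noncomputable def pQ {n : ℕ} (F : (Fin n → ℝ) → (Fin n → ℝ) → ℝ → ℝ) (i : Fin n)
    (a v : Fin n → ℝ) (t : ℝ) : ℝ :=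
  deriv (fun z => F (Function.update a i z) v t) (a i)

/-- Partial derivative of `F(q, q̇, t)` with respect to the velocity coordinate `q̇ᵢ`. -/
noncomputable def pV {n : ℕ} (F : (Fin n → ℝ) → (Fin n → ℝ) → ℝ → ℝ) (i : Fin n)
    (a v : Fin n → ℝ) (t : ℝ) : ℝ :=
  deriv (fun z => F a (Function.update v i z) t) (v i)

/-- The velocity of a curve `q : ℝ → ℝⁿ`. -/
noncomputable def vel {n : ℕ} (q : ℝ → Fin n → ℝ) (t : ℝ) : Fin n → ℝ :=
  fun i => deriv (fun s => q s i) t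

/-- Under commutation (C₀) and the Četaev condition (A), one has
`δ⁽ᵛ⁾g = −Σᵢ 𝒟ᵢg · δqᵢ`. -/
theorem cetaev_commutation_total_variation {n : ℕ}
    (g : (Fin n → ℝ) → (Fin n → ℝ) → ℝ → ℝ)
    (hg : ContDiff ℝ 2 (fun p : ((Fin n → ℝ) × (Fin n → ℝ)) × ℝ => g p.1.1 p.1.2 p.2))
    (q : ℝ → Fin n → ℝ) (hq : ContDiff ℝ 2 q)
    (δq δq' : ℝ → Fin n → ℝ)
    (hδq : ∀ i, ContDiff ℝ 1 fun s => δq s i)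
    -- commutation relations (C₀): δq̇ᵢ = d/dt(δqᵢ)
    (hcomm : ∀ s i, δq' s i = deriv (fun u => δq u i) s)
    -- Četaev condition (A): δ⁽ᶜ⁾g = 0 identically in t
    (hA : ∀ s, ∑ i, pV g i (q s) (vel q s) s * δq s i = 0)
    (t : ℝ) :
    (∑ i, pQ g i (q t) (vel q t) t * δq t i) + ∑ i, pV g i (q t) (vel q t) t * δq' t i
      = -∑ i, (deriv (fun s => pV g i (q s) (vel q s) s) t - pQ g i (q t) (vel q t) t)
          * δq t i := by
  set G : ((Fin n → ℝ) × (Fin n → ℝ)) × ℝ → ℝ := fun p => g p.1.1 p.1.2 p.2 with hG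
  have hGdiff : Differentiable ℝ G := hg.differentiable (by norm_num)
  -- pV as directional derivative of G
  have hpV : ∀ (i : Fin n) (a v : Fin n → ℝ) (s : ℝ),
      pV g i a v s = fderiv ℝ G ((a, v), s) ((0, Pi.single i 1), 0) := by
    intro i a v s
    have hφ : HasDerivAt (fun z : ℝ => (((a, Function.update v i z), s) :
        ((Fin n → ℝ) × (Fin n → ℝ)) × ℝ)) ((0, Pi.single i 1), 0) (v i) :=
      ((hasDerivAt_const _ a).prodMk (hasDerivAt_update v i (v i))).prodMk (hasDerivAt_const _ s)
    have := ((hGdiff _).hasFDerivAt.comp_hasDerivAt (v i) hφ)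
    simpa [pV, Function.update_eq_self, Function.comp_def] using this.deriv
  have hpQ : ∀ (i : Fin n) (a v : Fin n → ℝ) (s : ℝ),
      pQ g i a v s = fderiv ℝ G ((a, v), s) ((Pi.single i 1, 0), 0) := by
    intro i a v s
    have hφ : HasDerivAt (fun z : ℝ => (((Function.update a i z, v), s) :
        ((Fin n → ℝ) × (Fin n → ℝ)) × ℝ)) ((Pi.single i 1, 0), 0) (a i) :=
      ((hasDerivAt_update a i (a i)).prodMk (hasDerivAt_const _ v)).prodMk (hasDerivAt_const _ s)
    have := ((hGdiff _).hasFDerivAt.comp_hasDerivAt (a i) hφ)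
    simpa [pQ, Function.update_eq_self, Function.comp_def] using this.deriv
  -- the C¹ curve
  set γ : ℝ → ((Fin n → ℝ) × (Fin n → ℝ)) × ℝ := fun s => ((q s, vel q s), s) with hγdef
  have hvel : ContDiff ℝ 1 (vel q) := by
    rw [contDiff_pi]
    intro i
    have h2 : ContDiff ℝ 2 fun s => q s i := (contDiff_pi.mp hq) i
    have := (contDiff_succ_iff_deriv.mp (by exact_mod_cast h2 : ContDiff ℝ ((1:ℕ)+1) fun s => q s i)).2.2
    exact this
  have hγ : ContDiff ℝ 1 γ :=
    (((hq.of_le one_le_two).prodMk hvel).prodMk contDiff_id)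
  set P : Fin n → ℝ → ℝ := fun i s => fderiv ℝ G (γ s) ((0, Pi.single i 1), 0) with hPdef
  have hfd : ContDiff ℝ 1 (fderiv ℝ G) := hg.fderiv_right (by norm_num)
  have hP : ∀ i, ContDiff ℝ 1 (P i) := fun i => (hfd.comp hγ).clm_apply contDiff_const
  have hPeq : ∀ i s, pV g i (q s) (vel q s) s = P i s := fun i s => hpV i (q s) (vel q s) s
  -- key: derivative of the identically-zero Chetaev sum
  have hsum0 : (fun s => ∑ i, P i s * δq s i) = fun _ => 0 := by
    funext s
    rw [← hA s]
    exact Finset.sum_congr rfl fun i _ => by rw [hPeq]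
  have hterm : ∀ i, HasDerivAt (fun s => P i s * δq s i)
      (deriv (P i) t * δq t i + P i t * deriv (fun u => δq u i) t) t := by
    intro i
    exact ((hP i).differentiable one_ne_zero t).hasDerivAt.mul
      (((hδq i).differentiable one_ne_zero t).hasDerivAt)
  have hkey : ∑ i, (deriv (P i) t * δq t i + P i t * deriv (fun u => δq u i) t) = 0 := by
    have h1 : HasDerivAt (fun s => ∑ i, P i s * δq s i)
        (∑ i, (deriv (P i) t * δq t i + P i t * deriv (fun u => δq u i) t)) t :=
      HasDerivAt.fun_sum fun i _ => hterm i
    have h2 := h1.deriv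
    rw [hsum0] at h2
    simpa using h2.symm.trans (deriv_const t 0)
  have hkey2 : ∑ i, deriv (P i) t * δq t i + ∑ i, P i t * δq' t i = 0 := by
    rw [← Finset.sum_add_distrib, ← hkey]
    exact Finset.sum_congr rfl fun i _ => by rw [hcomm t i]
  -- rewrite goal in terms of P
  have hrw : ∀ i, deriv (fun s => pV g i (q s) (vel q s) s) t = deriv (P i) t := by
    intro i; congr 1; funext s; exact hPeq i s
  calc (∑ i, pQ g i (q t) (vel q t) t * δq t i) + ∑ i, pV g i (q t) (vel q t) t * δq' t i
      = (∑ i, pQ g i (q t) (vel q t) t * δq t i) + ∑ i, P i t * δq' t i := by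
        congr 1; exact Finset.sum_congr rfl fun i _ => by rw [hPeq]
    _ = (∑ i, pQ g i (q t) (vel q t) t * δq t i) - ∑ i, deriv (P i) t * δq t i := by
        linarith [hkey2]
    _ = -∑ i, (deriv (fun s => pV g i (q s) (vel q s) s) t - pQ g i (q t) (vel q t) t)
          * δq t i := by
        simp only [hrw, sub_mul, Finset.sum_sub_distrib, neg_sub]
end

section
/- If the commutation relations δq̇ᵢ = d/dt(δqᵢ) hold for all i and the total variation condition δ⁽ᵛ⁾g = 0 holds, then d/dt(δ⁽ᶜ⁾g) = Σᵢ 𝒟ᵢg · δqᵢ. -/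
open Function

lemma pV_eq {n : ℕ} (g : (Fin n → ℝ) → (Fin n → ℝ) → ℝ → ℝ)
    (hg : ContDiff ℝ 2 (fun p : ((Fin n → ℝ) × (Fin n → ℝ)) × ℝ => g p.1.1 p.1.2 p.2))
    (i : Fin n) (a v : Fin n → ℝ) (t : ℝ) :
    pV g i a v t =
      fderiv ℝ (fun p : ((Fin n → ℝ) × (Fin n → ℝ)) × ℝ => g p.1.1 p.1.2 p.2) ((a, v), t)
        (((0 : Fin n → ℝ), (Pi.single i 1 : Fin n → ℝ)), (0 : ℝ)) := by
  have hG' : HasFDerivAt (fun p : ((Fin n → ℝ) × (Fin n → ℝ)) × ℝ => g p.1.1 p.1.2 p.2)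
      (fderiv ℝ (fun p : ((Fin n → ℝ) × (Fin n → ℝ)) × ℝ => g p.1.1 p.1.2 p.2) ((a, v), t))
      ((a, Function.update v i (v i)), t) := by
    rw [Function.update_eq_self]
    exact ((hg.differentiable (by norm_num)) ((a, v), t)).hasFDerivAt
  have hφ : HasDerivAt (fun z => (((a, Function.update v i z) : _ × _), t))
      ((((0 : Fin n → ℝ), (Pi.single i 1 : Fin n → ℝ))), (0 : ℝ)) (v i) :=
    HasDerivAt.prodMk (HasDerivAt.prodMk (hasDerivAt_const (v i) a) (hasDerivAt_update v i (v i))) (hasDerivAt_const (v i) t)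
  exact (hG'.comp_hasDerivAt (v i) hφ).deriv

lemma pQ_eq {n : ℕ} (g : (Fin n → ℝ) → (Fin n → ℝ) → ℝ → ℝ)
    (hg : ContDiff ℝ 2 (fun p : ((Fin n → ℝ) × (Fin n → ℝ)) × ℝ => g p.1.1 p.1.2 p.2))
    (i : Fin n) (a v : Fin n → ℝ) (t : ℝ) :
    pQ g i a v t =
      fderiv ℝ (fun p : ((Fin n → ℝ) × (Fin n → ℝ)) × ℝ => g p.1.1 p.1.2 p.2) ((a, v), t)
        ((((Pi.single i 1 : Fin n → ℝ)), (0 : Fin n → ℝ)), (0 : ℝ)) := by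
  have hG' : HasFDerivAt (fun p : ((Fin n → ℝ) × (Fin n → ℝ)) × ℝ => g p.1.1 p.1.2 p.2)
      (fderiv ℝ (fun p : ((Fin n → ℝ) × (Fin n → ℝ)) × ℝ => g p.1.1 p.1.2 p.2) ((a, v), t))
      ((Function.update a i (a i), v), t) := by
    rw [Function.update_eq_self]
    exact ((hg.differentiable (by norm_num)) ((a, v), t)).hasFDerivAt
  have hφ : HasDerivAt (fun z => (((Function.update a i z, v) : _ × _), t))
      (((((Pi.single i 1 : Fin n → ℝ)), (0 : Fin n → ℝ))), (0 : ℝ)) (a i) :=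
    HasDerivAt.prodMk (HasDerivAt.prodMk (hasDerivAt_update a i (a i)) (hasDerivAt_const (a i) v)) (hasDerivAt_const (a i) t)
  exact (hG'.comp_hasDerivAt (a i) hφ).deriv

lemma curve_contDiff {n : ℕ} (q : ℝ → Fin n → ℝ) (hq : ContDiff ℝ 2 q) :
    ContDiff ℝ 1 (fun s => (((q s, vel q s) : _ × _), s) :
      ℝ → ((Fin n → ℝ) × (Fin n → ℝ)) × ℝ) := by
  have h1 : ContDiff ℝ 1 q := hq.of_le (by norm_num)
  have h2 : ContDiff ℝ 1 (vel q) := by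
    apply contDiff_pi.mpr
    intro i
    have := contDiff_pi.mp hq i
    have : ContDiff ℝ (1 + 1) (fun s => q s i) := by exact_mod_cast this
    exact (contDiff_succ_iff_deriv.mp this).2.2
  exact (h1.prodMk h2).prodMk contDiff_id

/-- Under commutation (C₀) and the total-variation condition (B), one has
`d/dt(δ⁽ᶜ⁾g) = Σᵢ 𝒟ᵢg · δqᵢ`. -/
theorem total_variation_commutation_cetaev_deriv {n : ℕ}
    (g : (Fin n → ℝ) → (Fin n → ℝ) → ℝ → ℝ)
    (hg : ContDiff ℝ 2 (fun p : ((Fin n → ℝ) × (Fin n → ℝ)) × ℝ => g p.1.1 p.1.2 p.2))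
    (q : ℝ → Fin n → ℝ) (hq : ContDiff ℝ 2 q)
    (δq δq' : ℝ → Fin n → ℝ)
    (hδq : ∀ i, ContDiff ℝ 1 fun s => δq s i)
    -- commutation relations (C₀): δq̇ᵢ = d/dt(δqᵢ)
    (hcomm : ∀ s i, δq' s i = deriv (fun u => δq u i) s)
    -- total variation condition (B): δ⁽ᵛ⁾g = 0 identically in t
    (hB : ∀ s, (∑ i, pQ g i (q s) (vel q s) s * δq s i)
        + ∑ i, pV g i (q s) (vel q s) s * δq' s i = 0)
    (t : ℝ) :
    deriv (fun s => ∑ i, pV g i (q s) (vel q s) s * δq s i) t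
      = ∑ i, (deriv (fun s => pV g i (q s) (vel q s) s) t - pQ g i (q t) (vel q t) t)
          * δq t i := by
  set G := fun p : ((Fin n → ℝ) × (Fin n → ℝ)) × ℝ => g p.1.1 p.1.2 p.2 with hGdef
  have hfd : ContDiff ℝ 1 (fderiv ℝ G) := hg.fderiv_right (by norm_num)
  have hcomp : ContDiff ℝ 1 (fun s => fderiv ℝ G ((q s, vel q s), s)) :=
    hfd.comp (curve_contDiff q hq)
  have hAdiff : ∀ i, DifferentiableAt ℝ (fun s => pV g i (q s) (vel q s) s) t := by
    intro i
    have heq : (fun s => pV g i (q s) (vel q s) s)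
        = fun s => fderiv ℝ G ((q s, vel q s), s)
            (((0 : Fin n → ℝ), (Pi.single i 1 : Fin n → ℝ)), (0 : ℝ)) :=
      funext fun s => pV_eq g hg i (q s) (vel q s) s
    rw [heq]
    exact ((hcomp.clm_apply contDiff_const).differentiable one_ne_zero) t
  have hδdiff : ∀ i, DifferentiableAt ℝ (fun s => δq s i) t :=
    fun i => ((hδq i).differentiable one_ne_zero) t
  have hsum : HasDerivAt (fun s => ∑ i, pV g i (q s) (vel q s) s * δq s i)
      (∑ i, (deriv (fun s => pV g i (q s) (vel q s) s) t * δq t i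
        + pV g i (q t) (vel q t) t * deriv (fun u => δq u i) t)) t := by
    apply HasDerivAt.fun_sum
    intro i _
    exact (hAdiff i).hasDerivAt.mul (hδdiff i).hasDerivAt
  rw [hsum.deriv]
  have hB' := hB t
  simp only [← hcomm t]
  simp only [sub_mul, Finset.sum_add_distrib, Finset.sum_sub_distrib]
  linarith [hB']
end

section
/- If Σᵢ 𝒟ᵢg · δqᵢ = 0 and the commutation relations δq̇ᵢ = d/dt(δqᵢ) hold, then δ⁽ᵛ⁾g = d/dt(δ⁽ᶜ⁾g); in particular, under these hypotheses δ⁽ᶜ⁾g = 0 identically implies δ⁽ᵛ⁾g = 0. -/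
open Function

lemma hasDerivAt_update' {n : ℕ} (v : Fin n → ℝ) (i : Fin n) (y : ℝ) :
    HasDerivAt (fun z => Function.update v i z) (Pi.single i (1:ℝ)) y := by
  have h := (hasFDerivAt_update (𝕜 := ℝ) v (i := i) y).hasDerivAt
  refine h.congr_deriv ?_
  funext j
  by_cases hj : j = i
  · subst hj; simp
  · simp [Pi.single_apply, hj]

/-- If `Σᵢ 𝒟ᵢg · δqᵢ = 0` and the commutation relations hold, then
`δ⁽ᵛ⁾g = d/dt(δ⁽ᶜ⁾g)`; in particular `δ⁽ᶜ⁾g = 0` identically implies `δ⁽ᵛ⁾g = 0`. -/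
theorem lagrangian_derivative_sum_zero_equivalence {n : ℕ}
    (g : (Fin n → ℝ) → (Fin n → ℝ) → ℝ → ℝ)
    (hg : ContDiff ℝ 2 (fun p : ((Fin n → ℝ) × (Fin n → ℝ)) × ℝ => g p.1.1 p.1.2 p.2))
    (q : ℝ → Fin n → ℝ) (hq : ContDiff ℝ 2 q)
    (δq δq' : ℝ → Fin n → ℝ)
    (hδq : ∀ i, ContDiff ℝ 1 fun s => δq s i)
    -- commutation relations (C₀): δq̇ᵢ = d/dt(δqᵢ)
    (hcomm : ∀ s i, δq' s i = deriv (fun u => δq u i) s)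
    -- Σᵢ 𝒟ᵢg · δqᵢ = 0 identically in t
    (hD : ∀ s, ∑ i, (deriv (fun u => pV g i (q u) (vel q u) u) s
        - pQ g i (q s) (vel q s) s) * δq s i = 0) :
    (∀ t, (∑ i, pQ g i (q t) (vel q t) t * δq t i)
        + ∑ i, pV g i (q t) (vel q t) t * δq' t i
      = deriv (fun s => ∑ i, pV g i (q s) (vel q s) s * δq s i) t)
    ∧ ((∀ s, ∑ i, pV g i (q s) (vel q s) s * δq s i = 0) →
        ∀ t, (∑ i, pQ g i (q t) (vel q t) t * δq t i)
          + ∑ i, pV g i (q t) (vel q t) t * δq' t i = 0) := by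
  set G : ((Fin n → ℝ) × (Fin n → ℝ)) × ℝ → ℝ :=
    fun p => g p.1.1 p.1.2 p.2 with hGdef
  -- pV as a directional fderiv of G
  have hpV : ∀ (i : Fin n) (a v : Fin n → ℝ) (t : ℝ),
      pV g i a v t = fderiv ℝ G ((a, v), t) ((0, Pi.single i 1), 0) := by
    intro i a v t
    have hinner : HasDerivAt (fun z => (((a, Function.update v i z), t) :
        ((Fin n → ℝ) × (Fin n → ℝ)) × ℝ)) ((0, Pi.single i 1), 0) (v i) :=
      ((hasDerivAt_const _ _).prodMk (hasDerivAt_update' v i (v i))).prodMk (hasDerivAt_const _ _)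
    have hGd : HasFDerivAt G (fderiv ℝ G ((a, v), t)) ((a, Function.update v i (v i)), t) := by
      rw [Function.update_eq_self]
      exact ((hg.differentiable (by norm_num)) _).hasFDerivAt
    have := hGd.comp_hasDerivAt (v i) hinner
    simpa [pV, hGdef, Function.comp_def] using this.deriv
  -- the curve u ↦ ((q u, vel q u), u) is C¹
  have hΦ : ContDiff ℝ 1 (fun u : ℝ => (((q u, vel q u), u) :
      ((Fin n → ℝ) × (Fin n → ℝ)) × ℝ)) := by
    refine ContDiff.prodMk (ContDiff.prodMk (hq.of_le (by norm_num)) ?_) contDiff_id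
    refine contDiff_pi.2 fun i => ?_
    have hqi : ContDiff ℝ 2 (fun s => q s i) := contDiff_pi.1 hq i
    have h21 : (2 : WithTop ℕ∞) = 1 + 1 := by norm_num
    rw [h21] at hqi
    exact (contDiff_succ_iff_deriv.1 hqi).2.2
  -- each u ↦ pV g i (q u) (vel q u) u is C¹
  have hF : ∀ i : Fin n, ContDiff ℝ 1 (fun u => pV g i (q u) (vel q u) u) := by
    intro i
    have h1 : ContDiff ℝ 1 (fun u => fderiv ℝ G (((q u, vel q u), u))) := by
      refine ContDiff.comp ?_ hΦ
      exact hg.fderiv_right (by norm_num)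
    have h2 : ContDiff ℝ 1 (fun u => fderiv ℝ G (((q u, vel q u), u))
        (((0, Pi.single i 1), 0) : ((Fin n → ℝ) × (Fin n → ℝ)) × ℝ)) :=
      h1.clm_apply contDiff_const
    convert h2 using 2 with u
    exact hpV i (q u) (vel q u) u
  -- derivative of the sum
  have key : ∀ t, deriv (fun s => ∑ i, pV g i (q s) (vel q s) s * δq s i) t
      = ∑ i, (deriv (fun u => pV g i (q u) (vel q u) u) t * δq t i
          + pV g i (q t) (vel q t) t * deriv (fun u => δq u i) t) := by
    intro t
    have : HasDerivAt (fun s => ∑ i, pV g i (q s) (vel q s) s * δq s i)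
        (∑ i, (deriv (fun u => pV g i (q u) (vel q u) u) t * δq t i
          + pV g i (q t) (vel q t) t * deriv (fun u => δq u i) t)) t := by
      refine HasDerivAt.fun_sum fun i _ => ?_
      exact (((hF i).differentiable one_ne_zero t).hasDerivAt).mul
        (((hδq i).differentiable one_ne_zero t).hasDerivAt)
    exact this.deriv
  have main : ∀ t, (∑ i, pQ g i (q t) (vel q t) t * δq t i)
        + ∑ i, pV g i (q t) (vel q t) t * δq' t i
      = deriv (fun s => ∑ i, pV g i (q s) (vel q s) s * δq s i) t := by
    intro t
    rw [key t, Finset.sum_add_distrib]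
    have hDt := hD t
    simp only [sub_mul] at hDt
    rw [Finset.sum_sub_distrib, sub_eq_zero] at hDt
    rw [← hDt]
    congr 1
    refine Finset.sum_congr rfl fun i _ => ?_
    rw [hcomm t i]
  refine ⟨main, fun hzero t => ?_⟩
  rw [main t]
  have : (fun s => ∑ i, pV g i (q s) (vel q s) s * δq s i) = fun _ => (0:ℝ) := by
    funext s; exact hzero s
  rw [this, deriv_const]
end

section
/- Let φ(q,t) be C¹ and g(q, q̇, t) be C² such that φ(q,t)·g(q, q̇, t) = Σⱼ (∂f/∂qⱼ) q̇ⱼ + ∂f/∂t for some C² function f(q,t) (integrating factor). Then along every C² curve q(t): φ · 𝒟ⱼg = g · ∂φ/∂qⱼ − φ̇ · ∂g/∂q̇ⱼ for each j, where φ̇ = d/dt φ(q(t), t) and 𝒟ⱼg = d/dt(∂g/∂q̇ⱼ) − ∂g/∂qⱼ. -/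
open Function

section helpers
variable {n : ℕ} {α : Type*} [NormedAddCommGroup α] [NormedSpace ℝ α]
lemma hasDerivAt_comp_updateQ {F : ((Fin n → ℝ) × ℝ) → α} {a : Fin n → ℝ} {t : ℝ}
    {L : ((Fin n → ℝ) × ℝ) →L[ℝ] α} (hF : HasFDerivAt F L (a, t)) (j : Fin n) :
    HasDerivAt (fun z => F (Function.update a j z, t)) (L (Pi.single j 1, 0)) (a j) := by
  have hc : HasDerivAt (fun z => ((Function.update a j z : Fin n → ℝ), t))
      (((Pi.single j 1 : Fin n → ℝ), (0 : ℝ))) (a j) :=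
    HasDerivAt.prodMk (hasDerivAt_update a j (a j)) (hasDerivAt_const _ _)
  have hF' : HasFDerivAt F L (Function.update a j (a j), t) := by
    rw [Function.update_eq_self]; exact hF
  exact hF'.comp_hasDerivAt (a j) hc

lemma hasDerivAt_comp_updateQ' {F : (((Fin n → ℝ) × (Fin n → ℝ)) × ℝ) → α} {a v : Fin n → ℝ}
    {t : ℝ} {L : (((Fin n → ℝ) × (Fin n → ℝ)) × ℝ) →L[ℝ] α}
    (hF : HasFDerivAt F L ((a, v), t)) (j : Fin n) :
    HasDerivAt (fun z => F ((Function.update a j z, v), t))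
      (L ((Pi.single j 1, 0), 0)) (a j) := by
  have hc : HasDerivAt (fun z => ((((Function.update a j z : Fin n → ℝ), v)), t))
      ((((Pi.single j 1 : Fin n → ℝ), (0 : Fin n → ℝ)), (0 : ℝ))) (a j) :=
    HasDerivAt.prodMk (HasDerivAt.prodMk (hasDerivAt_update a j (a j)) (hasDerivAt_const _ _)) (hasDerivAt_const _ _)
  have hF' : HasFDerivAt F L ((Function.update a j (a j), v), t) := by
    rw [Function.update_eq_self]; exact hF
  exact hF'.comp_hasDerivAt (a j) hc

lemma hasDerivAt_comp_updateV {F : (((Fin n → ℝ) × (Fin n → ℝ)) × ℝ) → α} {a v : Fin n → ℝ}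
    {t : ℝ} {L : (((Fin n → ℝ) × (Fin n → ℝ)) × ℝ) →L[ℝ] α}
    (hF : HasFDerivAt F L ((a, v), t)) (j : Fin n) :
    HasDerivAt (fun z => F ((a, Function.update v j z), t))
      (L ((0, Pi.single j 1), 0)) (v j) := by
  have hc : HasDerivAt (fun z => (((a, (Function.update v j z : Fin n → ℝ))), t))
      ((((0 : Fin n → ℝ), (Pi.single j 1 : Fin n → ℝ)), (0 : ℝ))) (v j) :=
    HasDerivAt.prodMk (HasDerivAt.prodMk (hasDerivAt_const _ _) (hasDerivAt_update v j (v j))) (hasDerivAt_const _ _)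
  have hF' : HasFDerivAt F L ((a, Function.update v j (v j)), t) := by
    rw [Function.update_eq_self]; exact hF
  exact hF'.comp_hasDerivAt (v j) hc

lemma clm_decomp (L : ((Fin n → ℝ) × ℝ) →L[ℝ] ℝ) (v : Fin n → ℝ) :
    (∑ k, L (Pi.single k 1, 0) * v k) + L (0, 1) = L (v, 1) := by
  have hsum : ∑ k, v k • (((Pi.single k 1 : Fin n → ℝ), (0 : ℝ)) : (Fin n → ℝ) × ℝ)
      = ((v, (0 : ℝ)) : (Fin n → ℝ) × ℝ) := by
    apply Prod.ext
    · rw [Prod.fst_sum]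
      funext i
      simp [Finset.sum_apply, Pi.single_apply, mul_ite]
    · rw [Prod.snd_sum]; simp
  have hv : ((v, (1 : ℝ)) : (Fin n → ℝ) × ℝ)
      = (∑ k, v k • (((Pi.single k 1 : Fin n → ℝ), (0 : ℝ)) : (Fin n → ℝ) × ℝ))
        + ((0, 1) : (Fin n → ℝ) × ℝ) := by
    rw [hsum]; ext <;> simp
  rw [hv, map_add, map_sum]
  simp only [map_smul, smul_eq_mul]
  congr 1
  exact Finset.sum_congr rfl fun k _ => mul_comm _ _
end helpers

/-- Integrating factor: if `φ(q,t)·g(q,q̇,t) = Σⱼ (∂f/∂qⱼ) q̇ⱼ + ∂f/∂t`, then along every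
C² curve, `φ·𝒟ⱼg = g·∂φ/∂qⱼ − φ̇·∂g/∂q̇ⱼ` for each `j`. -/
theorem integrating_factor_lagrangian_derivative {n : ℕ}
    (φ : (Fin n → ℝ) → ℝ → ℝ)
    (hφ : ContDiff ℝ 1 (fun p : (Fin n → ℝ) × ℝ => φ p.1 p.2))
    (f : (Fin n → ℝ) → ℝ → ℝ)
    (hf : ContDiff ℝ 2 (fun p : (Fin n → ℝ) × ℝ => f p.1 p.2))
    (g : (Fin n → ℝ) → (Fin n → ℝ) → ℝ → ℝ)
    (hg : ContDiff ℝ 2 (fun p : ((Fin n → ℝ) × (Fin n → ℝ)) × ℝ => g p.1.1 p.1.2 p.2))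
    (hfac : ∀ a v t, φ a t * g a v t
      = (∑ j, deriv (fun z => f (Function.update a j z) t) (a j) * v j)
        + deriv (fun s => f a s) t)
    (q : ℝ → Fin n → ℝ) (hq : ContDiff ℝ 2 q) :
    ∀ t (j : Fin n),
      φ (q t) t * (deriv (fun s => pV g j (q s) (vel q s) s) t - pQ g j (q t) (vel q t) t)
        = g (q t) (vel q t) t * deriv (fun z => φ (Function.update (q t) j z) t) (q t j)
          - deriv (fun s => φ (q s) s) t * pV g j (q t) (vel q t) t := by
  intro t j
  classical
  set Fp : (Fin n → ℝ) × ℝ → ℝ := fun p => f p.1 p.2 with hFpdef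
  set Gp : ((Fin n → ℝ) × (Fin n → ℝ)) × ℝ → ℝ := fun p => g p.1.1 p.1.2 p.2 with hGpdef
  have hFd : Differentiable ℝ Fp := hf.differentiable two_ne_zero
  have hGd : Differentiable ℝ Gp := hg.differentiable two_ne_zero
  have hφd : Differentiable ℝ (fun p : (Fin n → ℝ) × ℝ => φ p.1 p.2) := hφ.differentiable one_ne_zero
  have hF1 : ContDiff ℝ 1 (fderiv ℝ Fp) := hf.fderiv_right (by norm_num)
  have hG1 : ContDiff ℝ 1 (fderiv ℝ Gp) := hg.fderiv_right (by norm_num)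
  -- Step 1: φ·g as a first derivative of f
  have hkey : ∀ (a v : Fin n → ℝ) (τ : ℝ),
      φ a τ * g a v τ = fderiv ℝ Fp (a, τ) (v, 1) := by
    intro a v τ
    rw [hfac]
    have h1 : ∀ k : Fin n, deriv (fun z => f (Function.update a k z) τ) (a k)
        = fderiv ℝ Fp (a, τ) (Pi.single k 1, 0) := fun k =>
      (hasDerivAt_comp_updateQ ((hFd (a, τ)).hasFDerivAt) k).deriv
    have h2 : deriv (fun s => f a s) τ = fderiv ℝ Fp (a, τ) (0, 1) := by
      have hc : HasDerivAt (fun s : ℝ => ((a : Fin n → ℝ), s)) (((0 : Fin n → ℝ), (1 : ℝ))) τ :=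
        HasDerivAt.prodMk (hasDerivAt_const _ _) (hasDerivAt_id _)
      exact ((hFd (a, τ)).hasFDerivAt.comp_hasDerivAt _ hc).deriv
    simp_rw [h1, h2]
    exact clm_decomp _ v
  -- Step 2: pV of φ·g
  have hpVG : ∀ (a v : Fin n → ℝ) (τ : ℝ),
      φ a τ * pV g j a v τ = fderiv ℝ Fp (a, τ) (Pi.single j 1, 0) := by
    intro a v τ
    have hdg : DifferentiableAt ℝ (fun z => g a (Function.update v j z) τ) (v j) :=
      (hasDerivAt_comp_updateV ((hGd ((a, v), τ)).hasFDerivAt) j).differentiableAt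
    have hL : HasDerivAt (fun z => fderiv ℝ Fp (a, τ) ((Function.update v j z : Fin n → ℝ), (1 : ℝ)))
        (fderiv ℝ Fp (a, τ) (Pi.single j 1, 0)) (v j) := by
      have hc2 : HasDerivAt (fun z => ((Function.update v j z : Fin n → ℝ), (1 : ℝ)))
          (((Pi.single j 1 : Fin n → ℝ), (0 : ℝ))) (v j) :=
        HasDerivAt.prodMk (hasDerivAt_update v j (v j)) (hasDerivAt_const _ _)
      exact (fderiv ℝ Fp (a, τ)).hasFDerivAt.comp_hasDerivAt _ hc2
    calc φ a τ * pV g j a v τ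
        = deriv (fun z => φ a τ * g a (Function.update v j z) τ) (v j) :=
          (deriv_const_mul _ hdg).symm
      _ = deriv (fun z => fderiv ℝ Fp (a, τ) ((Function.update v j z : Fin n → ℝ), (1 : ℝ))) (v j) := by
          congr 1; funext z; exact hkey a (Function.update v j z) τ
      _ = _ := hL.deriv
  -- velocity facts
  have hqdiff : Differentiable ℝ q := hq.differentiable two_ne_zero
  have hqd : ∀ s, HasDerivAt q (vel q s) s := by
    intro s
    rw [hasDerivAt_pi]
    intro i
    have : DifferentiableAt ℝ (fun u => q u i) s :=
      ((ContinuousLinearMap.proj (R := ℝ) (φ := fun _ : Fin n => ℝ) i).differentiableAt).comp s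
        (hqdiff s)
    exact this.hasDerivAt
  have hc0 : HasDerivAt (fun s => ((q s : Fin n → ℝ), s)) ((vel q t, (1 : ℝ))) t :=
    HasDerivAt.prodMk (hqd t) (hasDerivAt_id t)
  have hvel_eq : vel q = fun s => fderiv ℝ q s 1 := by
    funext s i
    have h1 : HasFDerivAt q (fderiv ℝ q s) s := (hqdiff s).hasFDerivAt
    have h2 : HasDerivAt (fun u => q u i) ((fderiv ℝ q s 1) i) s := by
      exact
        (ContinuousLinearMap.proj (R := ℝ) (φ := fun _ : Fin n => ℝ) i).hasFDerivAt.comp_hasDerivAt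
          s h1.hasDerivAt
    exact h2.deriv
  have hvel1 : ContDiff ℝ 1 (vel q) := by
    rw [hvel_eq]
    exact (ContinuousLinearMap.apply ℝ (Fin n → ℝ) (1 : ℝ)).contDiff.comp
      (hq.fderiv_right (by norm_num))
  -- differentiability of Φ and P along the curve
  have hΦdiff : DifferentiableAt ℝ (fun s => φ (q s) s) t :=
    ((hφd (q t, t)).hasFDerivAt.comp_hasDerivAt (f := fun s => ((q s : Fin n → ℝ), s)) t hc0).differentiableAt
  have hpV_eq : ∀ (a v : Fin n → ℝ) (τ : ℝ),
      pV g j a v τ = fderiv ℝ Gp ((a, v), τ) ((0, Pi.single j 1), 0) := fun a v τ =>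
    (hasDerivAt_comp_updateV ((hGd ((a, v), τ)).hasFDerivAt) j).deriv
  have hPdiff : DifferentiableAt ℝ (fun s => pV g j (q s) (vel q s) s) t := by
    have hrw : (fun s => pV g j (q s) (vel q s) s)
        = fun s => (ContinuousLinearMap.apply ℝ ℝ
            ((((0 : Fin n → ℝ), (Pi.single j 1 : Fin n → ℝ)), (0 : ℝ))))
            (fderiv ℝ Gp ((q s, vel q s), s)) := by
      funext s; exact hpV_eq (q s) (vel q s) s
    rw [hrw]
    have hcurve : DifferentiableAt ℝ (fun s => (((q s, vel q s) : _ × _), s)) t :=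
      (DifferentiableAt.prodMk (DifferentiableAt.prodMk (hqdiff t) ((hvel1.differentiable one_ne_zero) t)) differentiableAt_id)
    exact (((ContinuousLinearMap.apply ℝ ℝ _).differentiable.comp
      (hG1.differentiable one_ne_zero)) _).comp t hcurve
  -- second derivative of Fp at (q t, t)
  have hB : HasFDerivAt (fderiv ℝ Fp) (fderiv ℝ (fderiv ℝ Fp) (q t, t)) (q t, t) :=
    ((hF1.differentiable one_ne_zero) _).hasFDerivAt
  -- time-derivative identity
  have hmain : deriv (fun s => φ (q s) s) t * pV g j (q t) (vel q t) t
      + φ (q t) t * deriv (fun s => pV g j (q s) (vel q s) s) t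
      = fderiv ℝ (fderiv ℝ Fp) (q t, t) (vel q t, 1) (Pi.single j 1, 0) := by
    have hprod := deriv_fun_mul hΦdiff hPdiff
    have hfn : (fun s => φ (q s) s * pV g j (q s) (vel q s) s)
        = fun s => fderiv ℝ Fp (q s, s) ((Pi.single j 1 : Fin n → ℝ), (0 : ℝ)) := by
      funext s; exact hpVG (q s) (vel q s) s
    have hR : HasDerivAt (fun s => fderiv ℝ Fp (q s, s) ((Pi.single j 1 : Fin n → ℝ), (0 : ℝ)))
        (fderiv ℝ (fderiv ℝ Fp) (q t, t) (vel q t, 1) (Pi.single j 1, 0)) t := by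
      exact
        ((ContinuousLinearMap.apply ℝ ℝ (((Pi.single j 1 : Fin n → ℝ), (0 : ℝ)))).hasFDerivAt.comp
          _ hB).comp_hasDerivAt (f := fun s => ((q s : Fin n → ℝ), s)) t hc0
    rw [← hprod, hfn, hR.deriv]
  -- pQ identity
  have hpQside : g (q t) (vel q t) t * deriv (fun z => φ (Function.update (q t) j z) t) (q t j)
      + φ (q t) t * pQ g j (q t) (vel q t) t
      = fderiv ℝ (fderiv ℝ Fp) (q t, t) (Pi.single j 1, 0) (vel q t, 1) := by
    set a := q t
    set v := vel q t
    have hdφ : DifferentiableAt ℝ (fun z => φ (Function.update a j z) t) (a j) :=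
      (hasDerivAt_comp_updateQ ((hφd (a, t)).hasFDerivAt) j).differentiableAt
    have hdg : DifferentiableAt ℝ (fun z => g (Function.update a j z) v t) (a j) :=
      (hasDerivAt_comp_updateQ' ((hGd ((a, v), t)).hasFDerivAt) j).differentiableAt
    have hprod := deriv_fun_mul hdφ hdg
    rw [Function.update_eq_self] at hprod
    have hfn : (fun z => φ (Function.update a j z) t * g (Function.update a j z) v t)
        = fun z => fderiv ℝ Fp ((Function.update a j z : Fin n → ℝ), t) ((v, (1 : ℝ))) := by
      funext z; exact hkey _ v t
    have hRq : HasDerivAt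
        (fun z => fderiv ℝ Fp ((Function.update a j z : Fin n → ℝ), t) ((v, (1 : ℝ))))
        (fderiv ℝ (fderiv ℝ Fp) (a, t) (Pi.single j 1, 0) (v, 1)) (a j) := by
      simpa using hasDerivAt_comp_updateQ
        (((ContinuousLinearMap.apply ℝ ℝ ((v, (1 : ℝ)) : (Fin n → ℝ) × ℝ)).hasFDerivAt.comp
          _ hB)) j
    have : deriv (fun z => φ (Function.update a j z) t * g (Function.update a j z) v t) (a j)
        = fderiv ℝ (fderiv ℝ Fp) (a, t) (Pi.single j 1, 0) (v, 1) := by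
      rw [hfn, hRq.deriv]
    rw [this] at hprod
    have hpq : pQ g j a v t = deriv (fun z => g (Function.update a j z) v t) (a j) := rfl
    rw [hpq]
    linarith [hprod]
  -- symmetry of the second derivative
  have hs : fderiv ℝ (fderiv ℝ Fp) (q t, t) (vel q t, (1 : ℝ)) ((Pi.single j 1 : Fin n → ℝ), (0 : ℝ))
      = fderiv ℝ (fderiv ℝ Fp) (q t, t) ((Pi.single j 1 : Fin n → ℝ), (0 : ℝ)) (vel q t, (1 : ℝ)) :=
    (hf.contDiffAt.isSymmSndFDerivAt (by simp)) _ _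
  linear_combination hmain - hpQside + hs
end

section
/- Under the integrating-factor hypothesis φg = df/dt, on the constraint manifold (i.e. at times where g(q(t), q̇(t), t) = 0) one has φ·𝒟ⱼg = −φ̇·∂g/∂q̇ⱼ; consequently, if the virtual displacement δq satisfies the Četaev condition Σⱼ (∂g/∂q̇ⱼ) δqⱼ = 0 and φ ≠ 0, then Σⱼ 𝒟ⱼg δqⱼ = 0. -/
open Function

/-- Integrating factor on the constraint manifold: at a time where
`g(q(t), q̇(t), t) = 0` one has `φ·𝒟ⱼg = −φ̇·∂g/∂q̇ⱼ`; consequently, if `δq` satisfies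
the Četaev condition and `φ ≠ 0`, then `Σⱼ 𝒟ⱼg δqⱼ = 0`. -/
theorem integrating_factor_on_constraint_manifold {n : ℕ}
    (φ : (Fin n → ℝ) → ℝ → ℝ)
    (hφ : ContDiff ℝ 1 (fun p : (Fin n → ℝ) × ℝ => φ p.1 p.2))
    (f : (Fin n → ℝ) → ℝ → ℝ)
    (hf : ContDiff ℝ 2 (fun p : (Fin n → ℝ) × ℝ => f p.1 p.2))
    (g : (Fin n → ℝ) → (Fin n → ℝ) → ℝ → ℝ)
    (hg : ContDiff ℝ 2 (fun p : ((Fin n → ℝ) × (Fin n → ℝ)) × ℝ => g p.1.1 p.1.2 p.2))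
    (hfac : ∀ a v t, φ a t * g a v t
      = (∑ j, deriv (fun z => f (Function.update a j z) t) (a j) * v j)
        + deriv (fun s => f a s) t)
    (q : ℝ → Fin n → ℝ) (hq : ContDiff ℝ 2 q)
    (t : ℝ) (hconstr : g (q t) (vel q t) t = 0) (hφ0 : φ (q t) t ≠ 0) :
    (∀ j : Fin n,
      φ (q t) t * (deriv (fun s => pV g j (q s) (vel q s) s) t - pQ g j (q t) (vel q t) t)
        = -(deriv (fun s => φ (q s) s) t) * pV g j (q t) (vel q t) t)
    ∧ (∀ δq : Fin n → ℝ, (∑ j, pV g j (q t) (vel q t) t * δq j = 0) →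
        ∑ j, (deriv (fun s => pV g j (q s) (vel q s) s) t - pQ g j (q t) (vel q t) t)
          * δq j = 0) := by
  classical
  set Fu : (Fin n → ℝ) × ℝ → ℝ := fun p => f p.1 p.2 with hFudef
  set Pu : (Fin n → ℝ) × ℝ → ℝ := fun p => φ p.1 p.2 with hPudef
  set Gu : ((Fin n → ℝ) × (Fin n → ℝ)) × ℝ → ℝ := fun p => g p.1.1 p.1.2 p.2 with hGudef
  have hFd : Differentiable ℝ Fu := hf.differentiable (by norm_num)
  have hGd : Differentiable ℝ Gu := hg.differentiable (by norm_num)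
  have hPd : Differentiable ℝ Pu := hφ.differentiable one_ne_zero
  have hF2 : ContDiff ℝ 1 (fderiv ℝ Fu) := hf.fderiv_right (by norm_num)
  have hG2 : ContDiff ℝ 1 (fderiv ℝ Gu) := hg.fderiv_right (by norm_num)
  -- partial derivatives of f as fderiv
  have h1 : ∀ (a : Fin n → ℝ) (t' : ℝ) (j : Fin n),
      HasDerivAt (fun z => f (Function.update a j z) t')
        (fderiv ℝ Fu (a, t') (Pi.single j 1, 0)) (a j) := by
    intro a t' j
    have hc : HasDerivAt (fun z => ((Function.update a j z, t') : (Fin n → ℝ) × ℝ))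
        (Pi.single j 1, 0) (a j) :=
      (hasDerivAt_update a j (a j)).prodMk (hasDerivAt_const _ _)
    simpa [Function.comp_def] using ((hFd (Function.update a j (a j), t')).hasFDerivAt.comp_hasDerivAt (a j) hc)
  have h2 : ∀ (a : Fin n → ℝ) (t' : ℝ),
      HasDerivAt (fun s => f a s) (fderiv ℝ Fu (a, t') ((0 : Fin n → ℝ), 1)) t' := by
    intro a t'
    have hc : HasDerivAt (fun s => ((a, s) : (Fin n → ℝ) × ℝ)) ((0 : Fin n → ℝ), 1) t' :=
      (hasDerivAt_const _ _).prodMk (hasDerivAt_id t')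
    simpa [Function.comp_def] using ((hFd (a, t')).hasFDerivAt.comp_hasDerivAt t' hc)
  have hP1 : ∀ (a : Fin n → ℝ) (t' : ℝ) (j : Fin n),
      HasDerivAt (fun z => φ (Function.update a j z) t')
        (fderiv ℝ Pu (a, t') (Pi.single j 1, 0)) (a j) := by
    intro a t' j
    have hc : HasDerivAt (fun z => ((Function.update a j z, t') : (Fin n → ℝ) × ℝ))
        (Pi.single j 1, 0) (a j) :=
      (hasDerivAt_update a j (a j)).prodMk (hasDerivAt_const _ _)
    simpa [Function.comp_def] using ((hPd (Function.update a j (a j), t')).hasFDerivAt.comp_hasDerivAt (a j) hc)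
  -- partial derivatives of g as fderiv
  have hGQ : ∀ (a v : Fin n → ℝ) (t' : ℝ) (j : Fin n),
      HasDerivAt (fun z => g (Function.update a j z) v t')
        (fderiv ℝ Gu ((a, v), t') ((Pi.single j 1, 0), 0)) (a j) := by
    intro a v t' j
    have hc : HasDerivAt
        (fun z => (((Function.update a j z, v), t') : ((Fin n → ℝ) × (Fin n → ℝ)) × ℝ))
        ((Pi.single j 1, 0), 0) (a j) :=
      (((hasDerivAt_update a j (a j)).prodMk (hasDerivAt_const _ _))).prodMk (hasDerivAt_const _ _)
    simpa [Function.comp_def] using ((hGd ((Function.update a j (a j), v), t')).hasFDerivAt.comp_hasDerivAt (a j) hc)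
  have hGV : ∀ (a v : Fin n → ℝ) (t' : ℝ) (j : Fin n),
      HasDerivAt (fun z => g a (Function.update v j z) t')
        (fderiv ℝ Gu ((a, v), t') (((0 : Fin n → ℝ), Pi.single j 1), 0)) (v j) := by
    intro a v t' j
    have hc : HasDerivAt
        (fun z => (((a, Function.update v j z), t') : ((Fin n → ℝ) × (Fin n → ℝ)) × ℝ))
        (((0 : Fin n → ℝ), Pi.single j 1), 0) (v j) :=
      (((hasDerivAt_const _ _).prodMk (hasDerivAt_update v j (v j)))).prodMk (hasDerivAt_const _ _)
    simpa [Function.comp_def] using ((hGd ((a, Function.update v j (v j)), t')).hasFDerivAt.comp_hasDerivAt (v j) hc)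
  have hpQ : ∀ (a v : Fin n → ℝ) (t' : ℝ) (j : Fin n),
      pQ g j a v t' = fderiv ℝ Gu ((a, v), t') ((Pi.single j 1, 0), 0) :=
    fun a v t' j => (hGQ a v t' j).deriv
  have hpV : ∀ (a v : Fin n → ℝ) (t' : ℝ) (j : Fin n),
      pV g j a v t' = fderiv ℝ Gu ((a, v), t') (((0 : Fin n → ℝ), Pi.single j 1), 0) :=
    fun a v t' j => (hGV a v t' j).deriv
  -- the integrating-factor identity in fderiv form
  have hfac' : ∀ (a v : Fin n → ℝ) (t' : ℝ), φ a t' * g a v t'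
      = (∑ k, fderiv ℝ Fu (a, t') (Pi.single k 1, 0) * v k)
        + fderiv ℝ Fu (a, t') ((0 : Fin n → ℝ), 1) := by
    intro a v t'
    rw [hfac a v t', ← (h2 a t').deriv]
    congr 1
    exact Finset.sum_congr rfl fun k _ => by rw [(h1 a t' k).deriv]
  -- Step 1: φ · ∂g/∂vⱼ = ∂f/∂qⱼ  (everywhere)
  have key : ∀ (a v : Fin n → ℝ) (t' : ℝ) (j : Fin n),
      φ a t' * fderiv ℝ Gu ((a, v), t') (((0 : Fin n → ℝ), Pi.single j 1), 0)
        = fderiv ℝ Fu (a, t') (Pi.single j 1, 0) := by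
    intro a v t' j
    have hL : HasDerivAt (fun z => φ a t' * g a (Function.update v j z) t')
        (φ a t' * fderiv ℝ Gu ((a, v), t') (((0 : Fin n → ℝ), Pi.single j 1), 0)) (v j) :=
      (hGV a v t' j).const_mul _
    have hsum : HasDerivAt
        (fun z => ∑ k, fderiv ℝ Fu (a, t') (Pi.single k 1, 0) * Function.update v j z k)
        (∑ k : Fin n, if k = j then fderiv ℝ Fu (a, t') (Pi.single k 1, 0) else 0) (v j) := by
      apply HasDerivAt.fun_sum
      intro k _
      rcases eq_or_ne k j with rfl | hk
      · simpa [Function.update_apply] using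
          ((hasDerivAt_id (v k)).const_mul (fderiv ℝ Fu (a, t') (Pi.single k 1, 0)))
      · simpa [Function.update_apply, hk] using
          hasDerivAt_const (v j) (fderiv ℝ Fu (a, t') (Pi.single k 1, 0) * v k)
    have hR : HasDerivAt
        (fun z => (∑ k, fderiv ℝ Fu (a, t') (Pi.single k 1, 0) * Function.update v j z k)
          + fderiv ℝ Fu (a, t') ((0 : Fin n → ℝ), 1))
        (fderiv ℝ Fu (a, t') (Pi.single j 1, 0)) (v j) := by
      have h := hsum.add_const (fderiv ℝ Fu (a, t') ((0 : Fin n → ℝ), 1))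
      simpa using h
    have heq : (fun z => φ a t' * g a (Function.update v j z) t')
        = (fun z => (∑ k, fderiv ℝ Fu (a, t') (Pi.single k 1, 0) * Function.update v j z k)
          + fderiv ℝ Fu (a, t') ((0 : Fin n → ℝ), 1)) :=
      funext fun z => hfac' a (Function.update v j z) t'
    exact (heq ▸ hL).unique hR
  -- curve facts
  have hqd : Differentiable ℝ q := hq.differentiable (by norm_num)
  have hvel : vel q = deriv q := by
    funext s i
    exact ((ContinuousLinearMap.proj (R := ℝ) (φ := fun _ : Fin n => ℝ) i).hasFDerivAt.comp_hasDerivAt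
      s (hqd s).hasDerivAt).deriv
  have hq1 : ContDiff ℝ 1 (deriv q) := by
    have h : ContDiff ℝ ((1 : ℕ) + 1) q := by
      exact_mod_cast hq
    exact (contDiff_succ_iff_deriv.mp h).2.2
  have hvel1 : ContDiff ℝ 1 (vel q) := hvel ▸ hq1
  have hc : ContDiff ℝ 1
      (fun s => (((q s, vel q s), s) : ((Fin n → ℝ) × (Fin n → ℝ)) × ℝ)) :=
    ((hq.of_le one_le_two).prodMk hvel1).prodMk contDiff_id
  have hBC : ∀ w, ContDiff ℝ 1 (fun x => fderiv ℝ Gu x w) :=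
    fun w => hG2.clm_apply contDiff_const
  have hpVfun : ∀ j : Fin n, (fun s => pV g j (q s) (vel q s) s)
      = fun s => fderiv ℝ Gu ((q s, vel q s), s) (((0 : Fin n → ℝ), Pi.single j 1), 0) :=
    fun j => funext fun s => hpV (q s) (vel q s) s j
  have hAdiff : ∀ j : Fin n, DifferentiableAt ℝ
      (fun s => fderiv ℝ Gu ((q s, vel q s), s) (((0 : Fin n → ℝ), Pi.single j 1), 0)) t :=
    fun j => (((hBC _).differentiable one_ne_zero).comp (hc.differentiable one_ne_zero)).differentiableAt
  -- second derivative of f and its symmetry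
  have hF2d : HasFDerivAt (fderiv ℝ Fu) (fderiv ℝ (fderiv ℝ Fu) (q t, t)) (q t, t) :=
    (hF2.differentiable one_ne_zero (q t, t)).hasFDerivAt
  have hsymm : ∀ u w, fderiv ℝ (fderiv ℝ Fu) (q t, t) u w
      = fderiv ℝ (fderiv ℝ Fu) (q t, t) w u :=
    second_derivative_symmetric (fun y => (hFd y).hasFDerivAt) hF2d
  have hev : ∀ w : (Fin n → ℝ) × ℝ, HasFDerivAt (fun x => fderiv ℝ Fu x w)
      ((fderiv ℝ (fderiv ℝ Fu) (q t, t)).flip w) (q t, t) := by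
    intro w
    have h := hF2d.clm_apply (hasFDerivAt_const w (q t, t))
    simpa using h
  -- product rule along the curve
  have hφdiff : DifferentiableAt ℝ (fun s => φ (q s) s) t := by
    have : (fun s => φ (q s) s) = fun s => Pu (q s, s) := rfl
    rw [this]
    exact (hPd.comp ((hqd.prodMk differentiable_id))).differentiableAt
  have hdcurve : HasDerivAt (fun s => ((q s, s) : (Fin n → ℝ) × ℝ)) (deriv q t, 1) t :=
    ((hqd t).hasDerivAt).prodMk (hasDerivAt_id t)
  have hFj : ∀ j : Fin n, HasDerivAt (fun s => fderiv ℝ Fu (q s, s) (Pi.single j 1, 0))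
      (fderiv ℝ (fderiv ℝ Fu) (q t, t) (deriv q t, 1) (Pi.single j 1, 0)) t := by
    intro j
    simpa [Function.comp_def] using (hev (Pi.single j 1, 0)).comp_hasDerivAt_of_eq t hdcurve rfl
  have hstep3 : ∀ j : Fin n,
      deriv (fun s => φ (q s) s) t
          * fderiv ℝ Gu ((q t, vel q t), t) (((0 : Fin n → ℝ), Pi.single j 1), 0)
        + φ (q t) t
          * deriv (fun s => fderiv ℝ Gu ((q s, vel q s), s) (((0 : Fin n → ℝ), Pi.single j 1), 0)) t
        = fderiv ℝ (fderiv ℝ Fu) (q t, t) (deriv q t, 1) (Pi.single j 1, 0) := by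
    intro j
    have hprod : HasDerivAt
        (fun s => φ (q s) s
          * fderiv ℝ Gu ((q s, vel q s), s) (((0 : Fin n → ℝ), Pi.single j 1), 0))
        (deriv (fun s => φ (q s) s) t
            * fderiv ℝ Gu ((q t, vel q t), t) (((0 : Fin n → ℝ), Pi.single j 1), 0)
          + φ (q t) t
            * deriv (fun s => fderiv ℝ Gu ((q s, vel q s), s)
                (((0 : Fin n → ℝ), Pi.single j 1), 0)) t) t :=
      hφdiff.hasDerivAt.mul (hAdiff j).hasDerivAt
    have heq : (fun s => φ (q s) s
          * fderiv ℝ Gu ((q s, vel q s), s) (((0 : Fin n → ℝ), Pi.single j 1), 0))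
        = fun s => fderiv ℝ Fu (q s, s) (Pi.single j 1, 0) :=
      funext fun s => key (q s) (vel q s) s j
    exact (heq ▸ hprod).unique (hFj j)
  -- Step 4: φ · ∂g/∂qⱼ on the constraint manifold
  have hstep4 : ∀ j : Fin n, φ (q t) t * pQ g j (q t) (vel q t) t
      = fderiv ℝ (fderiv ℝ Fu) (q t, t) (deriv q t, 1) (Pi.single j 1, 0) := by
    intro j
    set v := vel q t with hv
    have hupdc : HasDerivAt (fun z => ((Function.update (q t) j z, t) : (Fin n → ℝ) × ℝ))
        (Pi.single j 1, 0) (q t j) :=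
      (hasDerivAt_update (q t) j (q t j)).prodMk (hasDerivAt_const _ _)
    have hL : HasDerivAt
        (fun z => φ (Function.update (q t) j z) t * g (Function.update (q t) j z) v t)
        (fderiv ℝ Pu (q t, t) (Pi.single j 1, 0) * g (q t) v t
          + φ (q t) t * fderiv ℝ Gu ((q t, v), t) ((Pi.single j 1, 0), 0)) (q t j) := by
      have := (hP1 (q t) t j).fun_mul (hGQ (q t) v t j)
      simpa using this
    have hterm : ∀ w : (Fin n → ℝ) × ℝ, HasDerivAt
        (fun z => fderiv ℝ Fu (Function.update (q t) j z, t) w)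
        (fderiv ℝ (fderiv ℝ Fu) (q t, t) (Pi.single j 1, 0) w) (q t j) := by
      intro w
      have h := (hev w).comp_hasDerivAt_of_eq (q t j) hupdc (by simp)
      simpa [Function.comp_def] using h
    have hR : HasDerivAt
        (fun z => (∑ k, fderiv ℝ Fu (Function.update (q t) j z, t) (Pi.single k 1, 0) * v k)
          + fderiv ℝ Fu (Function.update (q t) j z, t) ((0 : Fin n → ℝ), 1))
        ((∑ k, fderiv ℝ (fderiv ℝ Fu) (q t, t) (Pi.single j 1, 0) (Pi.single k 1, 0) * v k)
          + fderiv ℝ (fderiv ℝ Fu) (q t, t) (Pi.single j 1, 0) ((0 : Fin n → ℝ), 1)) (q t j) := by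
      refine HasDerivAt.add ?_ (hterm ((0 : Fin n → ℝ), 1))
      exact HasDerivAt.fun_sum fun k _ => (hterm (Pi.single k 1, 0)).mul_const (v k)
    have heq : (fun z => φ (Function.update (q t) j z) t * g (Function.update (q t) j z) v t)
        = (fun z => (∑ k, fderiv ℝ Fu (Function.update (q t) j z, t) (Pi.single k 1, 0) * v k)
          + fderiv ℝ Fu (Function.update (q t) j z, t) ((0 : Fin n → ℝ), 1)) :=
      funext fun z => hfac' (Function.update (q t) j z) v t
    have huniq := (heq ▸ hL).unique hR
    rw [hconstr, mul_zero, zero_add] at huniq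
    rw [hpQ (q t) v t j, huniq]
    -- now use symmetry and linearity
    have hlin : (∑ k, fderiv ℝ (fderiv ℝ Fu) (q t, t) (Pi.single j 1, 0) (Pi.single k 1, 0) * v k)
          + fderiv ℝ (fderiv ℝ Fu) (q t, t) (Pi.single j 1, 0) ((0 : Fin n → ℝ), 1)
        = fderiv ℝ (fderiv ℝ Fu) (q t, t) (v, 1) (Pi.single j 1, 0) := by
      have hv1 : ((v, 1) : (Fin n → ℝ) × ℝ)
          = (∑ k, v k • ((Pi.single k 1 : Fin n → ℝ), (0 : ℝ))) + ((0 : Fin n → ℝ), 1) := by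
        have hs : (∑ k, v k • ((Pi.single k 1 : Fin n → ℝ), (0 : ℝ)))
            = ((v : Fin n → ℝ), (0 : ℝ)) := by
          rw [Prod.ext_iff]
          refine ⟨?_, by rw [Prod.snd_sum]; simp⟩
          rw [Prod.fst_sum]
          funext i
          simp [Finset.sum_apply, Pi.single_apply]
        rw [hs]
        ext i <;> simp
      rw [hv1, map_add, map_sum]
      simp only [map_smul, ContinuousLinearMap.add_apply, ContinuousLinearMap.sum_apply,
        ContinuousLinearMap.smul_apply, smul_eq_mul]
      congr 1
      · exact Finset.sum_congr rfl fun k _ => by rw [hsymm (Pi.single j 1, 0) (Pi.single k 1, 0)]; ring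
      · exact hsymm _ _
    rw [hlin, ← hvel, hv]
  -- combine
  have hmain : ∀ j : Fin n,
      φ (q t) t * (deriv (fun s => pV g j (q s) (vel q s) s) t - pQ g j (q t) (vel q t) t)
        = -(deriv (fun s => φ (q s) s) t) * pV g j (q t) (vel q t) t := by
    intro j
    have h3 := hstep3 j
    have h4 := hstep4 j
    rw [hpVfun j, hpV (q t) (vel q t) t j]
    rw [← h4] at h3
    linarith [h3]
  refine ⟨hmain, ?_⟩
  intro δq hδ
  have hsum : φ (q t) t * (∑ j, (deriv (fun s => pV g j (q s) (vel q s) s) t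
      - pQ g j (q t) (vel q t) t) * δq j) = 0 := by
    rw [Finset.mul_sum]
    have : ∀ j ∈ Finset.univ, φ (q t) t * ((deriv (fun s => pV g j (q s) (vel q s) s) t
        - pQ g j (q t) (vel q t) t) * δq j)
        = -(deriv (fun s => φ (q s) s) t) * (pV g j (q t) (vel q t) t * δq j) := by
      intro j _
      rw [← mul_assoc, hmain j, mul_assoc]
    rw [Finset.sum_congr rfl this, ← Finset.mul_sum, hδ, mul_zero]
  exact (mul_eq_zero.mp hsum).resolve_left hφ0
end
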